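/- arXiv:2101.00742 — 2 statements merged into one kernel-verified Lean document; each statement's English description precedes it below -/
import Mathlib

section
/- (Farkas' lemma) Let F be a real m×n matrix and b ∈ ℝ^m. Then exactly one of the following two statements is true: (1) there exists x ∈ ℝ^n with F x = b and x ≥ 0; (2) there exists y ∈ ℝ^m with Fᵀ y ≥ 0 and bᵀ y ≤ −1. -/
open Matrix

open Set


private lemma mulVec_eq_sum' {m : ℕ} {ι : Type*} [Fintype ι] (F : Matrix (Fin m) ι ℝ)
    (v : ι → ℝ) : F.mulVec v = ∑ i, v i • Fᵀ i := by
  funext k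
  simp [mulVec, dotProduct, Finset.sum_apply, mul_comm]

/-- Support reduction step: given a nontrivial nonnegative relation among the columns
supported in the support of `x`, we can reduce the support of `x`. -/
private lemma farkas_step {m n : ℕ} (F : Matrix (Fin m) (Fin n) ℝ) (x c : Fin n → ℝ)
    (hx : 0 ≤ x) (hc0 : F.mulVec c = 0) (hsupp : ∀ i, c i ≠ 0 → x i ≠ 0)
    (i₀ : Fin n) (hi₀ : 0 < c i₀) :
    ∃ x', 0 ≤ x' ∧ F.mulVec x' = F.mulVec x ∧ (∀ i, x' i ≠ 0 → x i ≠ 0) ∧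
      ∃ j, x j ≠ 0 ∧ x' j = 0 := by
  classical
  set T : Finset (Fin n) := Finset.univ.filter (fun i => 0 < c i) with hT
  have hTne : T.Nonempty := ⟨i₀, by simp [hT, hi₀]⟩
  obtain ⟨j, hjT, hjmin⟩ := T.exists_min_image (fun i => x i / c i) hTne
  have hcj : 0 < c j := by simpa [hT] using hjT
  have hxj : 0 < x j := lt_of_le_of_ne (hx j) (Ne.symm (hsupp j (ne_of_gt hcj)))
  set t : ℝ := x j / c j with ht
  have htpos : 0 < t := div_pos hxj hcj
  refine ⟨x - t • c, ?_, ?_, ?_, j, ne_of_gt hxj, ?_⟩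
  · intro i
    simp only [Pi.sub_apply, Pi.smul_apply, smul_eq_mul, Pi.zero_apply]
    rcases le_or_gt (c i) 0 with h | h
    · have h1 : (0:ℝ) ≤ x i := hx i
      nlinarith
    · have : t ≤ x i / c i := hjmin i (by simp [hT, h])
      rw [le_div_iff₀ h] at this
      linarith
  · rw [Matrix.mulVec_sub, Matrix.mulVec_smul, hc0]
    simp
  · intro i hi
    by_contra hxi
    have hci : c i = 0 := by
      by_contra hci
      exact hsupp i hci hxi
    simp [hxi, hci] at hi
  · simp only [Pi.sub_apply, Pi.smul_apply, smul_eq_mul, ht]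
    field_simp
    ring

/-- Carathéodory: every point of the cone is a nonneg combination supported on a set of
linearly independent columns. -/
private lemma farkas_caratheodory {m n : ℕ} (F : Matrix (Fin m) (Fin n) ℝ) (N : ℕ) :
    ∀ x : Fin n → ℝ, (Finset.univ.filter fun i => x i ≠ 0).card ≤ N → 0 ≤ x →
    ∃ s : Finset (Fin n), ∃ x' : Fin n → ℝ, 0 ≤ x' ∧ (∀ i ∉ s, x' i = 0) ∧
      LinearIndependent ℝ (fun i : s => Fᵀ (i : Fin n)) ∧ F.mulVec x' = F.mulVec x := by
  classical
  induction N with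
  | zero =>
      intro x hcard hx
      have hx0 : x = 0 := by
        funext i
        by_contra hi
        have : i ∈ Finset.univ.filter fun i => x i ≠ 0 := by simpa using hi
        have := Finset.card_pos.2 ⟨i, this⟩
        omega
      haveI : IsEmpty ((∅ : Finset (Fin n)) : Type) := by
        simp [Finset.isEmpty_coe_sort]
        exact ⟨fun x => x.2⟩
      exact ⟨∅, x, hx, fun i _ => by simp [hx0], linearIndependent_empty_type, rfl⟩
  | succ N ih =>
      intro x hcard hx
      set s : Finset (Fin n) := Finset.univ.filter (fun i => x i ≠ 0) with hs
      by_cases hind : LinearIndependent ℝ (fun i : s => Fᵀ (i : Fin n))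
      · exact ⟨s, x, hx, fun i hi => by simpa [hs] using hi, hind, rfl⟩
      · rw [Fintype.not_linearIndependent_iff] at hind
        obtain ⟨g, hgsum, i₁, hi₁⟩ := hind
        set c : Fin n → ℝ := fun i => if h : i ∈ s then g ⟨i, h⟩ else 0 with hcdef
        have hc0 : F.mulVec c = 0 := by
          rw [mulVec_eq_sum']
          rw [← Finset.sum_subset (Finset.subset_univ s)
            (by intro i _ hi; simp [hcdef, hi])]
          rw [← Finset.sum_attach s (fun i => c i • Fᵀ i)]
          simpa [hcdef] using hgsum
        have hsupp : ∀ i, c i ≠ 0 → x i ≠ 0 := by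
          intro i hci
          by_contra hxi
          apply hci
          simp [hcdef, hs, hxi]
        -- WLOG some positive coefficient
        have key : ∀ c : Fin n → ℝ, F.mulVec c = 0 → (∀ i, c i ≠ 0 → x i ≠ 0) →
            (∃ i, 0 < c i) → _root_.True := fun _ _ _ _ => trivial
        have hex : (∃ i₀, 0 < c i₀) ∨ (∃ i₀, 0 < (-c) i₀) := by
          rcases lt_trichotomy (g i₁) 0 with h | h | h
          · right; exact ⟨i₁, by simp [hcdef, (i₁ : Fin n).2, neg_pos]; simpa [hcdef, i₁.2] using h⟩
          · exact absurd h hi₁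
          · left; exact ⟨i₁, by simpa [hcdef, i₁.2] using h⟩
        have main : ∀ c : Fin n → ℝ, F.mulVec c = 0 → (∀ i, c i ≠ 0 → x i ≠ 0) →
            ∀ i₀, 0 < c i₀ → ∃ s : Finset (Fin n), ∃ x' : Fin n → ℝ, 0 ≤ x' ∧
              (∀ i ∉ s, x' i = 0) ∧ LinearIndependent ℝ (fun i : s => Fᵀ (i : Fin n)) ∧
              F.mulVec x' = F.mulVec x := by
          intro c hc0 hsupp i₀ hi₀
          obtain ⟨x', hx', hFx', hx'supp, j, hxj, hx'j⟩ := farkas_step F x c hx hc0 hsupp i₀ hi₀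
          have hsub : (Finset.univ.filter fun i => x' i ≠ 0) ⊆ s.erase j := by
            intro i hi
            simp only [Finset.mem_filter, Finset.mem_univ, true_and] at hi
            refine Finset.mem_erase.2 ⟨?_, by simp [hs, hx'supp i hi]⟩
            rintro rfl; exact hi hx'j
          have hcard' : (Finset.univ.filter fun i => x' i ≠ 0).card ≤ N := by
            have h1 := Finset.card_le_card hsub
            have h2 : j ∈ s := by simp [hs, hxj]
            have h3 := Finset.card_erase_of_mem h2
            omega
          obtain ⟨s', x'', h1, h2, h3, h4⟩ := ih x' hcard' hx'
          exact ⟨s', x'', h1, h2, h3, h4.trans hFx'⟩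
        rcases hex with ⟨i₀, hi₀⟩ | ⟨i₀, hi₀⟩
        · exact main c hc0 hsupp i₀ hi₀
        · exact main (-c) (by rw [Matrix.mulVec_neg, hc0, neg_zero])
            (fun i hi => hsupp i (by simpa using hi)) i₀ hi₀

private lemma farkas_closed {m n : ℕ} (F : Matrix (Fin m) (Fin n) ℝ) :
    IsClosed {b : Fin m → ℝ | ∃ x, 0 ≤ x ∧ F.mulVec x = b} := by
  classical
  have main : ∀ s : Finset (Fin n), IsClosed {b : Fin m → ℝ | ∃ x : Fin n → ℝ, 0 ≤ x ∧
      (∀ i ∉ s, x i = 0) ∧ (LinearIndependent ℝ fun i : s => Fᵀ (i : Fin n)) ∧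
      F.mulVec x = b} := by
    intro s
    by_cases hind : LinearIndependent ℝ fun i : s => Fᵀ (i : Fin n)
    · set M : Matrix (Fin m) ↥s ℝ := F.submatrix id ((↑) : ↥s → Fin n) with hM
      have hMg : ∀ x : Fin n → ℝ, (∀ i ∉ s, x i = 0) →
          M.mulVec (fun i : ↥s => x ↑i) = F.mulVec x := by
        intro x hxs
        rw [mulVec_eq_sum', mulVec_eq_sum']
        have h1 : ∑ i : ↥s, x ↑i • Mᵀ i = ∑ i ∈ s, x i • Fᵀ i :=
          Finset.sum_coe_sort s (fun i => x i • Fᵀ i)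
        rw [h1, Finset.sum_subset (Finset.subset_univ s)]
        intro i _ hi
        simp [hxs i hi]
      have hset : {b : Fin m → ℝ | ∃ x : Fin n → ℝ, 0 ≤ x ∧
          (∀ i ∉ s, x i = 0) ∧ (LinearIndependent ℝ fun i : s => Fᵀ (i : Fin n)) ∧
          F.mulVec x = b} = M.mulVecLin '' {c : ↥s → ℝ | 0 ≤ c} := by
        ext b
        constructor
        · rintro ⟨x, hx, hxs, -, rfl⟩
          exact ⟨fun i => x ↑i, fun i => hx ↑i, hMg x hxs⟩
        · rintro ⟨c, hc, rfl⟩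
          refine ⟨fun i => if h : i ∈ s then c ⟨i, h⟩ else 0, ?_, ?_, hind, ?_⟩
          · intro i
            by_cases h : i ∈ s
            · simpa [h] using hc ⟨i, h⟩
            · simp [h]
          · intro i hi; simp [hi]
          · rw [← hMg _ (fun i hi => by simp [hi])]
            funext i
            simp [i.2]
      rw [hset]
      have hinj : LinearMap.ker M.mulVecLin = ⊥ := by
        rw [LinearMap.ker_eq_bot']
        intro c hc
        rw [Fintype.linearIndependent_iff] at hind
        funext i
        have hc' : M.mulVec c = 0 := hc
        rw [mulVec_eq_sum'] at hc'
        exact hind c hc' i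
      have hemb := LinearMap.isClosedEmbedding_of_injective (𝕜 := ℝ) hinj
      refine hemb.isClosedMap _ ?_
      have : {c : ↥s → ℝ | 0 ≤ c} = ⋂ i : ↥s, {c : ↥s → ℝ | 0 ≤ c i} := by
        ext c; simp [Pi.le_def]
      rw [this]
      exact isClosed_iInter fun i => isClosed_le continuous_const (continuous_apply i)
    · convert isClosed_empty
      ext b
      simp only [mem_setOf_eq, mem_empty_iff_false, iff_false]
      rintro ⟨x, -, -, h, -⟩
      exact hind h
  have hunion : {b : Fin m → ℝ | ∃ x, 0 ≤ x ∧ F.mulVec x = b} =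
      ⋃ s : Finset (Fin n), {b : Fin m → ℝ | ∃ x : Fin n → ℝ, 0 ≤ x ∧
        (∀ i ∉ s, x i = 0) ∧ (LinearIndependent ℝ fun i : s => Fᵀ (i : Fin n)) ∧
        F.mulVec x = b} := by
    ext b
    simp only [mem_setOf_eq, mem_iUnion]
    constructor
    · rintro ⟨x, hx, rfl⟩
      obtain ⟨s, x', h1, h2, h3, h4⟩ := farkas_caratheodory F
        ((Finset.univ.filter fun i => x i ≠ 0).card) x le_rfl hx
      exact ⟨s, x', h1, h2, h3, h4⟩
    · rintro ⟨s, x, hx, -, -, rfl⟩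
      exact ⟨x, hx, rfl⟩
  rw [hunion]
  exact isClosed_iUnion_of_finite main
/-- (Farkas' lemma) Let `F` be a real `m × n` matrix and `b ∈ ℝ^m`. Then exactly one of
the following is true: (1) there exists `x ∈ ℝ^n` with `F x = b` and `x ≥ 0`;
(2) there exists `y ∈ ℝ^m` with `Fᵀ y ≥ 0` and `bᵀ y ≤ -1`. -/
theorem farkas_lemma (m n : ℕ) (F : Matrix (Fin m) (Fin n) ℝ) (b : Fin m → ℝ) :
    Xor' (∃ x : Fin n → ℝ, F.mulVec x = b ∧ 0 ≤ x)
      (∃ y : Fin m → ℝ, 0 ≤ Fᵀ.mulVec y ∧ b ⬝ᵥ y ≤ -1) := by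
  classical
  have hexcl : ¬((∃ x : Fin n → ℝ, F.mulVec x = b ∧ 0 ≤ x) ∧
      (∃ y : Fin m → ℝ, 0 ≤ Fᵀ.mulVec y ∧ b ⬝ᵥ y ≤ -1)) := by
    rintro ⟨⟨x, hFx, hx⟩, ⟨y, hy, hby⟩⟩
    have h1 : 0 ≤ x ⬝ᵥ Fᵀ.mulVec y :=
      Finset.sum_nonneg fun i _ => mul_nonneg (hx i) (hy i)
    have h2 : F.mulVec x ⬝ᵥ y = x ⬝ᵥ Fᵀ.mulVec y := by
      rw [dotProduct_mulVec, vecMul_transpose, dotProduct_comm]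
    rw [hFx] at h2
    linarith
  rcases Classical.em (∃ x : Fin n → ℝ, F.mulVec x = b ∧ 0 ≤ x) with h | h
  · exact Or.inl ⟨h, fun h2 => hexcl ⟨h, h2⟩⟩
  · refine Or.inr ⟨?_, h⟩
    set C : Set (Fin m → ℝ) := {b' | ∃ x, 0 ≤ x ∧ F.mulVec x = b'} with hC
    have hbC : b ∉ C := by
      rintro ⟨x, hx, hFx⟩
      exact h ⟨x, hFx, hx⟩
    have hconv : Convex ℝ C := by
      rintro p ⟨x1, hx1, rfl⟩ q ⟨x2, hx2, rfl⟩ a c ha hc hac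
      refine ⟨a • x1 + c • x2, ?_, ?_⟩
      · intro i
        simp only [Pi.add_apply, Pi.smul_apply, smul_eq_mul, Pi.zero_apply]
        have h1 : (0:ℝ) ≤ x1 i := hx1 i
        have h2 : (0:ℝ) ≤ x2 i := hx2 i
        positivity
      · rw [Matrix.mulVec_add, Matrix.mulVec_smul, Matrix.mulVec_smul]
    obtain ⟨f, u, hfb, hfs⟩ := geometric_hahn_banach_point_closed hconv (farkas_closed F) hbC
    have hu0 : u < 0 := by
      have h0 : (0 : Fin m → ℝ) ∈ C := ⟨0, le_refl 0, by simp⟩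
      simpa using hfs 0 h0
    have hcone : ∀ z ∈ C, 0 ≤ f z := by
      intro z hz
      by_contra hneg
      push_neg at hneg
      obtain ⟨x, hx, rfl⟩ := hz
      set t : ℝ := (u - 1) / f (F.mulVec x) with htdef
      have htpos : 0 < t := div_pos_of_neg_of_neg (by linarith) hneg
      have hmem : F.mulVec (t • x) ∈ C := ⟨t • x, smul_nonneg htpos.le hx, rfl⟩
      have := hfs _ hmem
      rw [Matrix.mulVec_smul] at this
      have hft : f (t • F.mulVec x) = t * f (F.mulVec x) := by
        rw [f.map_smul, smul_eq_mul]
      rw [hft, htdef, div_mul_cancel₀ _ (ne_of_lt hneg)] at this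
      linarith
    set y : Fin m → ℝ := fun k => f (Pi.single k 1) with hy
    have hrep : ∀ z : Fin m → ℝ, f z = z ⬝ᵥ y := by
      intro z
      have hz : z = ∑ k, z k • (Pi.single k 1 : Fin m → ℝ) := by
        funext i
        rw [Finset.sum_apply]
        simp [Pi.single_apply, mul_comm]
      conv_lhs => rw [hz]
      rw [map_sum]
      simp only [f.map_smul, smul_eq_mul]
      rfl
    clear_value y
    have hFty : 0 ≤ Fᵀ.mulVec y := by
      intro j
      have hcol : (fun k => F k j) ∈ C := ⟨Pi.single j 1, fun i => by
        simp [Pi.single_apply]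
        positivity, by
        funext k
        simp [Matrix.mulVec, dotProduct, Pi.single_apply]⟩
      have h1 : 0 ≤ f (fun k => F k j) := hcone _ hcol
      rw [hrep] at h1
      simpa [Matrix.mulVec, dotProduct, Matrix.transpose_apply] using h1
    have hby : b ⬝ᵥ y < 0 := by
      have := hrep b
      rw [← this]
      linarith
    refine ⟨(-(b ⬝ᵥ y))⁻¹ • y, ?_, ?_⟩
    · intro j
      have h1 := hFty j
      have h2 : (0:ℝ) < (-(b ⬝ᵥ y))⁻¹ := by
        apply inv_pos.2; linarith
      have : Fᵀ.mulVec ((-(b ⬝ᵥ y))⁻¹ • y) j = (-(b ⬝ᵥ y))⁻¹ * Fᵀ.mulVec y j := by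
        rw [Matrix.mulVec_smul]; rfl
      rw [Pi.zero_apply] at h1 ⊢
      rw [this]
      positivity
    · have h1 : b ⬝ᵥ ((-(b ⬝ᵥ y))⁻¹ • y) = (-(b ⬝ᵥ y))⁻¹ * (b ⬝ᵥ y) := by
        rw [dotProduct_smul]; rfl
      have hpos : (0:ℝ) < -(b ⬝ᵥ y) := by linarith
      rw [h1, inv_mul_eq_div, div_le_iff₀ hpos]
      linarith
end

section
/- Let A be a real m×n matrix, b ∈ ℝ^m, c ∈ ℝ^n and M ∈ ℝ. The set {x ∈ ℝ^n : cᵀx ≥ M, A x ≤ b, x ≥ 0} is empty if and only if there exist y₁ ∈ ℝ and y₂ ∈ ℝ^m with y₁ ≥ 0, y₂ ≥ 0, −y₁·c + Aᵀy₂ ≥ 0 (componentwise), and −M·y₁ + bᵀy₂ ≤ −1. -/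
open Matrix BigOperators

section Cone

variable {E : Type*} [AddCommGroup E] [Module ℝ E] {ι : Type*} [Fintype ι]

/-- Conic Carathéodory: any nonnegative combination can be rewritten as a nonnegative
combination whose support is linearly independent. -/
lemma cone_caratheodory_aux (v : ι → E) :
    ∀ (N : ℕ) (t : ι → ℝ), 0 ≤ t → (Finset.univ.filter fun i => t i ≠ 0).card ≤ N →
    ∃ u : ι → ℝ, 0 ≤ u ∧ ∑ i, u i • v i = ∑ i, t i • v i ∧
      LinearIndependent ℝ (fun i : {i // u i ≠ 0} => v i) := by
  classical
  intro N
  induction N with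
  | zero =>
    intro t ht hcard
    refine ⟨t, ht, rfl, ?_⟩
    have hempty : IsEmpty {i // t i ≠ 0} := by
      constructor; rintro ⟨i, hi⟩
      have : i ∈ Finset.univ.filter fun i => t i ≠ 0 := by simp [hi]
      rw [Finset.card_eq_zero.mp (Nat.le_zero.mp hcard)] at this
      simp at this
    exact linearIndependent_empty_type
  | succ N ih =>
    intro t ht hcard
    by_cases hli : LinearIndependent ℝ (fun i : {i // t i ≠ 0} => v i)
    · exact ⟨t, ht, rfl, hli⟩
    · rw [Fintype.not_linearIndependent_iff] at hli
      obtain ⟨g₀, hg₀sum, i₀, hi₀⟩ := hli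
      have key : ∀ g : {i // t i ≠ 0} → ℝ, (∑ i, g i • v i = 0) → (∃ i, 0 < g i) →
          ∃ u : ι → ℝ, 0 ≤ u ∧ ∑ i, u i • v i = ∑ i, t i • v i ∧
            LinearIndependent ℝ (fun i : {i // u i ≠ 0} => v i) := by
        rintro g hgsum ⟨ip, hip⟩
        set g' : ι → ℝ := fun i => if h : t i ≠ 0 then g ⟨i, h⟩ else 0 with hg'
        have hg'sub : ∀ i (h : t i ≠ 0), g' i = g ⟨i, h⟩ := by
          intro i h; simp [hg', h]
        have hg'zero : ∀ i, t i = 0 → g' i = 0 := by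
          intro i h; simp [hg', h]
        have hg'sum : ∑ i, g' i • v i = 0 := by
          have h1 : ∑ i ∈ Finset.univ.filter (fun i => t i ≠ 0), g' i • v i
              = ∑ i, g' i • v i := by
            apply Finset.sum_filter_of_ne
            intro i _ hne
            by_cases hti : t i = 0
            · rw [hg'zero i hti, zero_smul] at hne; exact absurd rfl hne
            · exact hti
          have h2 : ∑ i ∈ Finset.univ.filter (fun i => t i ≠ 0), g' i • v i
              = ∑ i : {i // t i ≠ 0}, g' i.1 • v i.1 :=
            Finset.sum_subtype _ (fun x => by simp) _
          rw [← h1, h2, ← hgsum]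
          exact Finset.sum_congr rfl fun i _ => by rw [hg'sub i.1 i.2]
        set pos : Finset ι := Finset.univ.filter fun i => 0 < g' i with hpos
        have hpne : pos.Nonempty := ⟨ip.1, by simp [hpos, hg'sub ip.1 ip.2, hip]⟩
        obtain ⟨i₁, hi₁mem, hi₁min⟩ := Finset.exists_min_image pos (fun i => t i / g' i) hpne
        have hgi₁ : 0 < g' i₁ := by simpa [hpos] using hi₁mem
        set α : ℝ := t i₁ / g' i₁ with hα
        have hα0 : 0 ≤ α := div_nonneg (ht i₁) hgi₁.le
        set u : ι → ℝ := fun i => t i - α * g' i with hu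
        have hu0 : 0 ≤ u := by
          intro i
          have hti : (0:ℝ) ≤ t i := ht i
          by_cases h : 0 < g' i
          · have hmin := hi₁min i (by simp [hpos, h])
            have hle : α * g' i ≤ t i := (le_div_iff₀ h).mp hmin
            simpa [hu] using sub_nonneg.mpr hle
          · push_neg at h
            have h1 : α * g' i ≤ 0 := mul_nonpos_of_nonneg_of_nonpos hα0 h
            show (0:ℝ) ≤ t i - α * g' i
            linarith
        have husum : ∑ i, u i • v i = ∑ i, t i • v i := by
          have h0 : ∑ i, (α * g' i) • v i = α • ∑ i, g' i • v i := by
            rw [Finset.smul_sum]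
            exact Finset.sum_congr rfl fun i _ => mul_smul α (g' i) (v i)
          have : ∀ i, u i • v i = t i • v i - (α * g' i) • v i := by
            intro i; rw [hu]; simp [sub_smul]
          simp only [this, Finset.sum_sub_distrib, h0, hg'sum, smul_zero, sub_zero]
        have huzero : ∀ i, t i = 0 → u i = 0 := by
          intro i h; simp [hu, h, hg'zero i h]
        have hti₁ : t i₁ ≠ 0 := by
          intro h; rw [hg'zero i₁ h] at hgi₁; exact lt_irrefl 0 hgi₁
        have hui₁ : u i₁ = 0 := by
          rw [hu]
          show t i₁ - α * g' i₁ = 0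
          rw [hα, div_mul_cancel₀ _ hgi₁.ne', sub_self]
        have hss : (Finset.univ.filter fun i => u i ≠ 0) ⊂
            (Finset.univ.filter fun i => t i ≠ 0) := by
          constructor
          · intro i hi
            simp only [Finset.mem_filter, Finset.mem_univ, true_and] at hi ⊢
            intro h; exact hi (huzero i h)
          · intro hsub
            have := hsub (by simp [hti₁] : i₁ ∈ _)
            simp only [Finset.mem_filter, Finset.mem_univ, true_and] at this
            exact this hui₁
        have hcard' : (Finset.univ.filter fun i => u i ≠ 0).card ≤ N := by
          have := Finset.card_lt_card hss
          omega
        obtain ⟨w, hw0, hwsum, hwli⟩ := ih u hu0 hcard'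
        exact ⟨w, hw0, hwsum.trans husum, hwli⟩
      rcases hi₀.lt_or_gt with h | h
      · refine key (-g₀) ?_ ⟨i₀, by simpa using h⟩
        simp only [Pi.neg_apply, neg_smul, Finset.sum_neg_distrib, hg₀sum, neg_zero]
      · exact key g₀ hg₀sum ⟨i₀, h⟩

end Cone

section Closed

variable {H : Type*} [NormedAddCommGroup H] [NormedSpace ℝ H]
  {ι : Type*} [Fintype ι]

lemma coneSet_eq_image (v : ι → H) (s : Finset ι)
    (φ : (s → ℝ) →ₗ[ℝ] H) (hφ : ∀ t, φ t = ∑ i : s, t i • v i) :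
    {x : H | ∃ t : s → ℝ, 0 ≤ t ∧ x = ∑ i : s, t i • v i}
      = φ '' {t | 0 ≤ t} := by
  ext x
  constructor
  · rintro ⟨t, ht, rfl⟩; exact ⟨t, ht, hφ t⟩
  · rintro ⟨t, ht, rfl⟩; exact ⟨t, ht, hφ t⟩

lemma cone_isClosed (v : ι → H) :
    IsClosed {x : H | ∃ t : ι → ℝ, 0 ≤ t ∧ x = ∑ i, t i • v i} := by
  classical
  have hset : {x : H | ∃ t : ι → ℝ, 0 ≤ t ∧ x = ∑ i, t i • v i} =
      ⋃ (s : Finset ι) (_ : LinearIndependent ℝ (fun i : s => v i)),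
        {x : H | ∃ t : s → ℝ, 0 ≤ t ∧ x = ∑ i : s, t i • v ↑i} := by
    ext x
    constructor
    · rintro ⟨t, ht, rfl⟩
      obtain ⟨u, hu, husum, huli⟩ := cone_caratheodory_aux v
        (Finset.univ.filter fun i => t i ≠ 0).card t ht le_rfl
      set s : Finset ι := Finset.univ.filter fun i => u i ≠ 0 with hs
      have he : LinearIndependent ℝ (fun i : s => v ↑i) := by
        let e : {i // i ∈ s} ≃ {i // u i ≠ 0} :=
          Equiv.subtypeEquivRight (fun i => by simp [hs])
        have h := (linearIndependent_equiv e (f := fun i : {i // u i ≠ 0} => v ↑i)).mpr huli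
        have hcomp : ((fun i : {i // u i ≠ 0} => v ↑i) ∘ ⇑e) = fun i : s => v ↑i := by
          funext i; rfl
        rwa [hcomp] at h
      refine Set.mem_iUnion.mpr ⟨s, Set.mem_iUnion.mpr ⟨he, ⟨fun i => u ↑i, fun i => hu ↑i, ?_⟩⟩⟩
      have h1 : ∑ i ∈ s, u i • v i = ∑ i, u i • v i := by
        apply Finset.sum_filter_of_ne
        intro i _ hne
        by_cases hui : u i = 0
        · rw [hui, zero_smul] at hne; exact absurd rfl hne
        · exact hui
      have h2 : ∑ i ∈ s, u i • v i = ∑ i : s, u ↑i • v ↑i :=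
        Finset.sum_subtype s (fun x => Iff.rfl) _
      rw [← husum, ← h1, h2]
    · intro hx
      obtain ⟨s, hs⟩ := Set.mem_iUnion.mp hx
      obtain ⟨_, t, ht, rfl⟩ := Set.mem_iUnion.mp hs
      set t' : ι → ℝ := fun i => if h : i ∈ s then t ⟨i, h⟩ else 0 with ht'
      refine ⟨t', fun i => ?_, ?_⟩
      · by_cases h : i ∈ s
        · simpa [ht', h] using ht ⟨i, h⟩
        · simp [ht', h]
      · have h1 : ∑ i ∈ s, t' i • v i = ∑ i, t' i • v i := by
          apply Finset.sum_subset s.subset_univ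
          intro i _ hni
          simp [ht', hni]
        have h2 : ∑ i ∈ s, t' i • v i = ∑ i : s, t' ↑i • v ↑i :=
          Finset.sum_subtype s (fun x => Iff.rfl) _
        rw [← h1, h2]
        exact Finset.sum_congr rfl fun i _ => by simp [ht', i.2]
  rw [hset]
  refine isClosed_iUnion_of_finite fun s => ?_
  by_cases hLI : LinearIndependent ℝ (fun i : s => v ↑i)
  · simp only [hLI, Set.iUnion_true]
    set φ : (s → ℝ) →ₗ[ℝ] H :=
      { toFun := fun t => ∑ i : s, t i • v ↑i
        map_add' := by intro a b; simp [add_smul, Finset.sum_add_distrib]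
        map_smul' := by
          intro r a
          simp only [RingHom.id_apply, Finset.smul_sum]
          exact Finset.sum_congr rfl fun i _ => (mul_smul r (a i) (v ↑i)) } with hφ
    have hker : LinearMap.ker φ = ⊥ := by
      rw [LinearMap.ker_eq_bot']
      intro g hg
      exact funext fun i => Fintype.linearIndependent_iff.mp hLI g hg i
    have hemb := φ.isClosedEmbedding_of_injective hker
    rw [coneSet_eq_image v s φ (fun t => rfl)]
    apply hemb.isClosedMap
    have : {t : s → ℝ | 0 ≤ t} = ⋂ i, {t : s → ℝ | 0 ≤ t i} := by
      ext t; simp [Pi.le_def]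
    rw [this]
    exact isClosed_iInter fun i => isClosed_le continuous_const (continuous_apply i)
  · have h : (⋃ (_ : LinearIndependent ℝ (fun i : s => v ↑i)),
        {x : H | ∃ t : s → ℝ, 0 ≤ t ∧ x = ∑ i : s, t i • v ↑i}) = ∅ := by
      simp [hLI]
    rw [h]; exact isClosed_empty

end Closed
section Farkas

open scoped InnerProductSpace

variable {k : ℕ} {ι : Type*} [Fintype ι]

lemma farkas_separation (v : ι → EuclideanSpace ℝ (Fin k)) (d : EuclideanSpace ℝ (Fin k))
    (hd : ¬ ∃ t : ι → ℝ, 0 ≤ t ∧ d = ∑ i, t i • v i) :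
    ∃ y : EuclideanSpace ℝ (Fin k), (∀ i, 0 ≤ ⟪v i, y⟫_ℝ) ∧ ⟪y, d⟫_ℝ < 0 := by
  classical
  set K : ConvexCone ℝ (EuclideanSpace ℝ (Fin k)) :=
    { carrier := {x | ∃ t : ι → ℝ, 0 ≤ t ∧ x = ∑ i, t i • v i}
      smul_mem' := by
        rintro r hr x ⟨t, ht, rfl⟩
        refine ⟨r • t, fun i => mul_nonneg hr.le (ht i), ?_⟩
        rw [Finset.smul_sum]
        exact Finset.sum_congr rfl fun i _ => (mul_smul r (t i) (v i)).symm ▸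
          (mul_smul r (t i) (v i))
      add_mem' := by
        rintro x ⟨t, ht, rfl⟩ y ⟨u, hu, rfl⟩
        exact ⟨t + u, fun i => add_nonneg (ht i) (hu i), by
          simp [add_smul, Finset.sum_add_distrib]⟩ } with hK
  have hne : (K : Set (EuclideanSpace ℝ (Fin k))).Nonempty :=
    ⟨0, ⟨0, le_rfl, by simp⟩⟩
  have hclosed : IsClosed (K : Set (EuclideanSpace ℝ (Fin k))) := cone_isClosed v
  have hdK : d ∉ K := hd
  obtain ⟨y, hy1, hy2⟩ : ∃ y, (∀ x ∈ K, 0 ≤ ⟪x, y⟫_ℝ) ∧ ⟪y, d⟫_ℝ < 0 := by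
    let C : ProperCone ℝ (EuclideanSpace ℝ (Fin k)) :=
      { carrier := {x | ∃ t : ι → ℝ, 0 ≤ t ∧ x = ∑ i, t i • v i}
        add_mem' := fun ha hb => K.add_mem ha hb
        zero_mem' := ⟨0, le_rfl, by simp⟩
        smul_mem' := by
          rintro ⟨c, hc⟩ x ⟨t, ht, rfl⟩
          refine ⟨c • t, fun i => mul_nonneg hc (ht i), ?_⟩
          show (c • ∑ i, t i • v i) = _
          simp [Finset.smul_sum, mul_smul]
        isClosed' := hclosed }
    obtain ⟨y, h1, h2⟩ := C.hyperplane_separation' (x₀ := d) hdK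
    exact ⟨y, h1, by rwa [real_inner_comm]⟩
  refine ⟨y, fun i => ?_, hy2⟩
  apply hy1
  refine ⟨fun j => if j = i then 1 else 0, fun j => by positivity, ?_⟩
  have hh : ∀ j, (fun j => if j = i then (1:ℝ) else 0) j • v j = if j = i then v j else 0 := by
    intro j; by_cases h : j = i <;> simp [h]
  rw [Finset.sum_congr rfl (fun j _ => hh j)]
  simp
end Farkas
section Main

open scoped InnerProductSpace

lemma esum_apply {k : ℕ} {ι : Type*} (s : Finset ι) (f : ι → EuclideanSpace ℝ (Fin k))
    (j : Fin k) : (∑ i ∈ s, f i) j = ∑ i ∈ s, f i j := by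
  classical
  induction s using Finset.cons_induction with
  | empty => rfl
  | cons a s ha ih => rw [Finset.sum_cons, Finset.sum_cons, ← ih]; rfl

/-- The set `{x : cᵀx ≥ M, A x ≤ b, x ≥ 0}` is empty iff there exist `y₁ ∈ ℝ`, `y₂ ∈ ℝ^m`
with `y₁ ≥ 0`, `y₂ ≥ 0`, `-y₁ c + Aᵀ y₂ ≥ 0` and `-M y₁ + bᵀ y₂ ≤ -1`. -/
theorem infeasibility_certificate (m n : ℕ) (A : Matrix (Fin m) (Fin n) ℝ)
    (b : Fin m → ℝ) (c : Fin n → ℝ) (M : ℝ) :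
    {x : Fin n → ℝ | c ⬝ᵥ x ≥ M ∧ A.mulVec x ≤ b ∧ 0 ≤ x} = ∅ ↔
      (∃ (y₁ : ℝ) (y₂ : Fin m → ℝ),
        0 ≤ y₁ ∧ 0 ≤ y₂ ∧ 0 ≤ -y₁ • c + Aᵀ.mulVec y₂ ∧ -M * y₁ + b ⬝ᵥ y₂ ≤ -1) := by
  classical
  constructor
  · -- hard direction
    intro hempty
    set v : (Fin n ⊕ Fin (m+1)) → EuclideanSpace ℝ (Fin (m+1)) :=
      Sum.elim (fun j => WithLp.toLp 2 (Fin.cons (-c j) (fun i' => A i' j) : Fin (m+1) → ℝ))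
        (fun i => EuclideanSpace.single i 1) with hv
    set d : EuclideanSpace ℝ (Fin (m+1)) := WithLp.toLp 2 (Fin.cons (-M) b : Fin (m+1) → ℝ) with hdd
    have hd : ¬ ∃ t : (Fin n ⊕ Fin (m+1)) → ℝ, 0 ≤ t ∧ d = ∑ i, t i • v i := by
      rintro ⟨t, ht, hsum⟩
      set x : Fin n → ℝ := fun j => t (Sum.inl j) with hx
      have hco : ∀ i : Fin (m+1),
          d i = (∑ j, t (Sum.inl j) * (v (Sum.inl j) i)) + t (Sum.inr i) := by
        intro i
        have h1 : d i = ∑ i', (t i' • v i') i := by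
          rw [hsum]; exact esum_apply Finset.univ (fun i' => t i' • v i') i
        rw [h1]
        simp only [PiLp.smul_apply, smul_eq_mul, Fintype.sum_sum_type]
        congr 1
        have : ∀ i₂ : Fin (m+1), t (Sum.inr i₂) * (v (Sum.inr i₂) i)
            = if i = i₂ then t (Sum.inr i₂) else 0 := by
          intro i₂
          rw [hv]
          simp only [Sum.elim_inr, EuclideanSpace.single_apply]
          by_cases h : i = i₂ <;> simp [h]
        rw [Finset.sum_congr rfl fun i₂ _ => this i₂]
        simp
      have hfeas : x ∈ {x : Fin n → ℝ | c ⬝ᵥ x ≥ M ∧ A.mulVec x ≤ b ∧ 0 ≤ x} := by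
        refine ⟨?_, ?_, fun j => ht (Sum.inl j)⟩
        · -- M ≤ c ⬝ᵥ x
          have h0 := hco 0
          have hd0 : d 0 = -M := by rw [hdd]; exact Fin.cons_zero (α := fun _ : Fin (m+1) => ℝ) (-M) b
          have hv0 : ∀ j, v (Sum.inl j) 0 = -c j := by
            intro j; rw [hv]; simp only [Sum.elim_inl]; exact Fin.cons_zero _ _
          rw [hd0, Finset.sum_congr rfl fun j _ => by rw [hv0 j]] at h0
          have hsum0 : ∑ j, t (Sum.inl j) * (-c j) = -(c ⬝ᵥ x) := by
            have : c ⬝ᵥ x = ∑ j, c j * x j := rfl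
            rw [this, ← Finset.sum_neg_distrib]
            exact Finset.sum_congr rfl fun j _ => by rw [hx]; ring
          rw [hsum0] at h0
          have htr : (0:ℝ) ≤ t (Sum.inr 0) := ht (Sum.inr 0)
          show M ≤ c ⬝ᵥ x
          linarith
        · -- A x ≤ b
          intro i₂
          have h0 := hco i₂.succ
          have hdsucc : d i₂.succ = b i₂ := by rw [hdd]; exact Fin.cons_succ (α := fun _ : Fin (m+1) => ℝ) (-M) b i₂
          have hvsucc : ∀ j, v (Sum.inl j) i₂.succ = A i₂ j := by
            intro j; rw [hv]; simp only [Sum.elim_inl]; exact Fin.cons_succ _ _ _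
          rw [hdsucc, Finset.sum_congr rfl fun j _ => by rw [hvsucc j]] at h0
          have hmv : A.mulVec x i₂ = ∑ j, t (Sum.inl j) * A i₂ j := by
            show ∑ j, A i₂ j * x j = _
            exact Finset.sum_congr rfl fun j _ => by rw [hx]; ring
          have htr : (0:ℝ) ≤ t (Sum.inr i₂.succ) := ht (Sum.inr i₂.succ)
          show A.mulVec x i₂ ≤ b i₂
          rw [hmv]
          linarith
      rw [Set.eq_empty_iff_forall_notMem] at hempty
      exact hempty x hfeas
    obtain ⟨y, hy1, hy2⟩ := farkas_separation v d hd
    have hynn : ∀ i : Fin (m+1), 0 ≤ y i := by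
      intro i
      have h := hy1 (Sum.inr i)
      rw [hv] at h
      simp only [Sum.elim_inr] at h
      rw [EuclideanSpace.inner_single_left] at h
      simpa using h
    set δ : ℝ := -⟪y, d⟫_ℝ with hδdef
    have hδ : 0 < δ := by rw [hδdef]; linarith
    have hinner_d : ⟪y, d⟫_ℝ = y 0 * (-M) + ∑ i₂, y i₂.succ * b i₂ := by
      rw [PiLp.inner_apply]
      simp only [RCLike.inner_apply, conj_trivial]
      rw [Fin.sum_univ_succ, hdd]
      simp only [Fin.cons_zero, Fin.cons_succ]
      rw [Finset.sum_congr rfl fun i _ => mul_comm (b i) (y i.succ)]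
      ring
    have hinner_col : ∀ j, ⟪v (Sum.inl j), y⟫_ℝ
        = (-c j) * y 0 + ∑ i₂, A i₂ j * y i₂.succ := by
      intro j
      rw [PiLp.inner_apply]
      simp only [RCLike.inner_apply, conj_trivial]
      rw [Fin.sum_univ_succ, hv]
      simp only [Sum.elim_inl, Fin.cons_zero, Fin.cons_succ]
      rw [Finset.sum_congr rfl fun i _ => mul_comm (y i.succ) (A i j)]
      ring
    refine ⟨y 0 / δ, fun i => y i.succ / δ, div_nonneg (hynn 0) hδ.le,
      fun i => div_nonneg (hynn i.succ) hδ.le, ?_, ?_⟩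
    · intro j
      have hcol := hy1 (Sum.inl j)
      rw [hinner_col j] at hcol
      show (0 : ℝ) ≤ (-(y 0 / δ)) • c j + Aᵀ.mulVec (fun i => y i.succ / δ) j
      have hmv : Aᵀ.mulVec (fun i => y i.succ / δ) j = (∑ i₂, A i₂ j * y i₂.succ) / δ := by
        show ∑ i₂, Aᵀ j i₂ * (y i₂.succ / δ) = _
        rw [Finset.sum_div]
        exact Finset.sum_congr rfl fun i₂ _ => by rw [Matrix.transpose_apply]; ring
      rw [hmv]
      have heq : (-(y 0 / δ)) • c j + (∑ i₂, A i₂ j * y i₂.succ) / δ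
          = ((-c j) * y 0 + ∑ i₂, A i₂ j * y i₂.succ) / δ := by
        rw [smul_eq_mul]; ring
      rw [heq]
      exact div_nonneg hcol hδ.le
    · have hbd : b ⬝ᵥ (fun i => y i.succ / δ) = (∑ i₂, y i₂.succ * b i₂) / δ := by
        show ∑ i₂, b i₂ * (y i₂.succ / δ) = _
        rw [Finset.sum_div]
        exact Finset.sum_congr rfl fun i₂ _ => by ring
      rw [hbd]
      have hval : y 0 * (-M) + ∑ i₂, y i₂.succ * b i₂ = -δ := by
        rw [hδdef, ← hinner_d]; ring
      have heq : -M * (y 0 / δ) + (∑ i₂, y i₂.succ * b i₂) / δ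
          = (y 0 * (-M) + ∑ i₂, y i₂.succ * b i₂) / δ := by ring
      rw [heq, hval, neg_div, div_self hδ.ne']
  · -- easy direction
    rintro ⟨y₁, y₂, hy₁, hy₂, hpos, hle⟩
    rw [Set.eq_empty_iff_forall_notMem]
    rintro x ⟨hcx, hAx, hx⟩
    have hpos' : ∀ j, 0 ≤ -y₁ * c j + ∑ i, A i j * y₂ i := by
      intro j
      have h := hpos j
      simpa [Matrix.mulVec, dotProduct, Matrix.transpose_apply] using h
    have h1 : (0:ℝ) ≤ ∑ j, (-y₁ * c j + ∑ i, A i j * y₂ i) * x j :=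
      Finset.sum_nonneg fun j _ => mul_nonneg (hpos' j) (hx j)
    have h2 : ∑ j, (-y₁ * c j + ∑ i, A i j * y₂ i) * x j
        = -y₁ * (∑ j, c j * x j) + ∑ i, y₂ i * (∑ j, A i j * x j) := by
      rw [Finset.sum_congr rfl fun j _ => add_mul (-y₁ * c j) (∑ i, A i j * y₂ i) (x j),
        Finset.sum_add_distrib]
      congr 1
      · rw [Finset.mul_sum]
        exact Finset.sum_congr rfl fun j _ => by ring
      · rw [Finset.sum_congr rfl fun j _ => Finset.sum_mul Finset.univ (fun i => A i j * y₂ i) (x j),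
          Finset.sum_comm]
        exact Finset.sum_congr rfl fun i _ => by
          rw [Finset.mul_sum]
          exact Finset.sum_congr rfl fun j _ => by ring
    have hcx' : M ≤ ∑ j, c j * x j := hcx
    have hAx' : ∀ i, ∑ j, A i j * x j ≤ b i := hAx
    have h3 : ∑ i, y₂ i * (∑ j, A i j * x j) ≤ ∑ i, y₂ i * b i :=
      Finset.sum_le_sum fun i _ => mul_le_mul_of_nonneg_left (hAx' i) (hy₂ i)
    have h4 : -y₁ * (∑ j, c j * x j) ≤ -y₁ * M := by nlinarith
    have h5 : -M * y₁ + ∑ i, b i * y₂ i ≤ -1 := hle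
    have h6 : ∑ i, y₂ i * b i = ∑ i, b i * y₂ i :=
      Finset.sum_congr rfl fun i _ => mul_comm _ _
    linarith [h1, h2 ▸ h1]

end Main
end
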